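/- Assume ε·λ_max(L_s + D_ω) < 2. Then every local minimizer U* of E on Σ is binary, i.e., U* ∈ Σ̄, and moreover U* is a strict local minimizer: there exists r > 0 such that E(U) > E(U*) for every U ∈ Σ with 0 < ‖U − U*‖_F < r. -/

import Mathlib

open Matrix

noncomputable section

/-- The unit simplex `Δ` in `ℝ^K`. -/
def unitSimplex (K : ℕ) : Set (Fin K → ℝ) :=
  {y | (∀ j, 0 ≤ y j) ∧ ∑ j, y j = 1}

/-- `Σ`: matrices in `ℝ^{n×K}` each of whose rows lies in the unit simplex. -/
def SigmaSet (n K : ℕ) : Set (Matrix (Fin n) (Fin K) ℝ) :=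
  {U | ∀ i, U i ∈ unitSimplex K}

/-- `Σ̄`: binary matrices in `Σ`. -/
def SigmaBar (n K : ℕ) : Set (Matrix (Fin n) (Fin K) ℝ) :=
  {U | U ∈ SigmaSet n K ∧ ∀ i j, U i j = 0 ∨ U i j = 1}

/-- Frobenius inner product `⟨A,B⟩ = trace(AᵀB)`. -/
def frobInner {n K : ℕ} (A B : Matrix (Fin n) (Fin K) ℝ) : ℝ :=
  Matrix.trace (Aᵀ * B)

/-- Frobenius norm. -/
def frobNorm {n K : ℕ} (A : Matrix (Fin n) (Fin K) ℝ) : ℝ :=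
  Real.sqrt (∑ i, ∑ j, (A i j) ^ 2)

/-- The energy
`E(U) = (1/2)·trace(Uᵀ Lₛ U) + (1/ε)·Σᵢ uᵢᵀ(𝟙 − uᵢ) + (1/2)·Σᵢ ωᵢ‖ûᵢ − uᵢ‖²`. -/
def En {n K : ℕ} (Ls : Matrix (Fin n) (Fin n) ℝ) (ω : Fin n → ℝ)
    (Uhat : Matrix (Fin n) (Fin K) ℝ) (ε : ℝ) (U : Matrix (Fin n) (Fin K) ℝ) : ℝ :=
  (1 / 2) * Matrix.trace (Uᵀ * Ls * U)
    + (1 / ε) * ∑ i, ∑ j, U i j * (1 - U i j)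
    + (1 / 2) * ∑ i, ω i * ∑ j, (Uhat i j - U i j) ^ 2

/-- The gradient `∇E(U) = Lₛ U + (1/ε)(J − 2U) − D_ω(Û − U)` (`J` the all-ones matrix). -/
def gradE {n K : ℕ} (Ls : Matrix (Fin n) (Fin n) ℝ) (ω : Fin n → ℝ)
    (Uhat : Matrix (Fin n) (Fin K) ℝ) (ε : ℝ) (U : Matrix (Fin n) (Fin K) ℝ) :
    Matrix (Fin n) (Fin K) ℝ :=
  Ls * U + (1 / ε) • (Matrix.of (fun _ _ => (1 : ℝ)) - 2 • U)
    - Matrix.diagonal ω * (Uhat - U)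

/-! ### Auxiliary machinery -/

lemma rayleigh_upper {n : ℕ} {H : Matrix (Fin n) (Fin n) ℝ} (hH : H.IsHermitian) {lam : ℝ}
    (hlam : ∀ i, hH.eigenvalues i ≤ lam) (v : Fin n → ℝ) :
    v ⬝ᵥ (H *ᵥ v) ≤ lam * (∑ i, v i ^ 2) := by
  have hC : (hH.eigenvectorUnitary : Matrix (Fin n) (Fin n) ℝ) *
      star (hH.eigenvectorUnitary : Matrix (Fin n) (Fin n) ℝ) = 1 :=
    (Matrix.mem_unitaryGroup_iff).mp hH.eigenvectorUnitary.2
  have h1 : lam • (1 : Matrix (Fin n) (Fin n) ℝ) - H =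
      (hH.eigenvectorUnitary : Matrix (Fin n) (Fin n) ℝ) *
        Matrix.diagonal (fun i => lam - hH.eigenvalues i) *
        (hH.eigenvectorUnitary : Matrix (Fin n) (Fin n) ℝ)ᴴ := by
    conv_lhs => rw [hH.spectral_theorem]
    have : (Matrix.diagonal (fun i => lam - hH.eigenvalues i)) =
        lam • (1 : Matrix (Fin n) (Fin n) ℝ) - Matrix.diagonal (RCLike.ofReal ∘ hH.eigenvalues) := by
      simp [Matrix.smul_one_eq_diagonal, Matrix.diagonal_sub]
    rw [this, Matrix.mul_sub, Matrix.sub_mul, Matrix.mul_smul, Matrix.smul_mul, mul_one]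
    rw [show (hH.eigenvectorUnitary : Matrix (Fin n) (Fin n) ℝ) *
      (hH.eigenvectorUnitary : Matrix (Fin n) (Fin n) ℝ)ᴴ = 1 from hC]
    rfl
  have hpsd : (lam • (1 : Matrix (Fin n) (Fin n) ℝ) - H).PosSemidef := by
    rw [h1]
    exact (Matrix.PosSemidef.diagonal
      (fun i => by simpa using sub_nonneg.mpr (hlam i))).mul_mul_conjTranspose_same _
  have := hpsd.dotProduct_mulVec_nonneg v
  have hstar : star v = v := rfl
  rw [hstar, Matrix.sub_mulVec, Matrix.smul_mulVec, Matrix.one_mulVec,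
    dotProduct_sub, dotProduct_smul] at this
  have hvv : v ⬝ᵥ v = ∑ i, v i ^ 2 := by
    simp [dotProduct, pow_two]
  rw [hvv] at this
  simpa using sub_nonneg.mp this

def Gm {n K : ℕ} (Ls : Matrix (Fin n) (Fin n) ℝ) (ω : Fin n → ℝ)
    (Uhat : Matrix (Fin n) (Fin K) ℝ) (ε : ℝ) (U : Matrix (Fin n) (Fin K) ℝ)
    (i : Fin n) (j : Fin K) : ℝ :=
  (∑ i', Ls i i' * U i' j) + (1/ε) * (1 - 2 * U i j) - ω i * (Uhat i j - U i j)

def linE {n K : ℕ} (Ls : Matrix (Fin n) (Fin n) ℝ) (ω : Fin n → ℝ)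
    (Uhat : Matrix (Fin n) (Fin K) ℝ) (ε : ℝ) (U W : Matrix (Fin n) (Fin K) ℝ) : ℝ :=
  ∑ i, ∑ j, Gm Ls ω Uhat ε U i j * W i j

def quadE {n K : ℕ} (Ls : Matrix (Fin n) (Fin n) ℝ) (ω : Fin n → ℝ)
    (ε : ℝ) (W : Matrix (Fin n) (Fin K) ℝ) : ℝ :=
  (1/2) * (∑ j, ∑ i, W i j * ∑ i', Ls i i' * W i' j)
    + (1/2) * (∑ i, ∑ j, ω i * W i j ^ 2)
    - (1/ε) * ∑ i, ∑ j, W i j ^ 2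

def pairM {n K : ℕ} (i : Fin n) (j j' : Fin K) : Matrix (Fin n) (Fin K) ℝ :=
  Matrix.of fun a b => if a = i then (if b = j then (1:ℝ) else 0) - (if b = j' then 1 else 0) else 0

lemma trace_form {n K : ℕ} (Ls : Matrix (Fin n) (Fin n) ℝ) (A : Matrix (Fin n) (Fin K) ℝ) :
    Matrix.trace (Aᵀ * Ls * A) = ∑ j, ∑ i, A i j * ∑ i', Ls i i' * A i' j := by
  rw [Matrix.mul_assoc]
  simp [Matrix.trace, Matrix.mul_apply, Matrix.diag, Finset.mul_sum]

lemma omega_pull {n K : ℕ} (ω : Fin n → ℝ) (f : Fin n → Fin K → ℝ) :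
    ∑ i, ω i * ∑ j, f i j = ∑ i, ∑ j, ω i * f i j := by
  simp [Finset.mul_sum]

lemma symm_cross {n : ℕ} {Ls : Matrix (Fin n) (Fin n) ℝ} (hsym : ∀ a b, Ls a b = Ls b a)
    (u w : Fin n → ℝ) :
    ∑ i, u i * ∑ i', Ls i i' * w i' = ∑ i, w i * ∑ i', Ls i i' * u i' := by
  simp_rw [Finset.mul_sum]
  rw [Finset.sum_comm]
  refine Finset.sum_congr rfl fun a _ => Finset.sum_congr rfl fun b _ => ?_
  rw [hsym a b]; ring

lemma En_expand {n K : ℕ} {Ls : Matrix (Fin n) (Fin n) ℝ} (hsym : ∀ a b, Ls a b = Ls b a)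
    (ω : Fin n → ℝ) (Uhat : Matrix (Fin n) (Fin K) ℝ) (ε : ℝ)
    (U W : Matrix (Fin n) (Fin K) ℝ) :
    En Ls ω Uhat ε (U + W) = En Ls ω Uhat ε U + linE Ls ω Uhat ε U W + quadE Ls ω ε W := by
  have hT1 : Matrix.trace ((U + W)ᵀ * Ls * (U + W))
      = Matrix.trace (Uᵀ * Ls * U)
        + 2 * (∑ i, ∑ j, ((∑ i', Ls i i' * U i' j) * W i j))
        + (∑ j, ∑ i, W i j * ∑ i', Ls i i' * W i' j) := by
    rw [trace_form, trace_form]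
    have point : ∀ j i, (U + W) i j * (∑ i', Ls i i' * (U + W) i' j)
        = U i j * (∑ i', Ls i i' * U i' j)
          + (U i j * (∑ i', Ls i i' * W i' j) + W i j * (∑ i', Ls i i' * U i' j))
          + W i j * (∑ i', Ls i i' * W i' j) := by
      intro j i
      simp only [Matrix.add_apply, mul_add, Finset.sum_add_distrib]
      ring
    rw [Finset.sum_congr rfl fun j _ => Finset.sum_congr rfl fun i _ => point j i]
    simp only [Finset.sum_add_distrib]
    have cross : ∀ j, ∑ i, U i j * (∑ i', Ls i i' * W i' j)
        = ∑ i, W i j * (∑ i', Ls i i' * U i' j) := fun j =>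
      symm_cross hsym (fun i => U i j) (fun i => W i j)
    rw [Finset.sum_congr rfl fun j _ => cross j]
    have swap : ∑ j, ∑ i, (W i j * ∑ i', Ls i i' * U i' j)
        = ∑ i, ∑ j, ((∑ i', Ls i i' * U i' j) * W i j) := by
      rw [Finset.sum_comm]
      exact Finset.sum_congr rfl fun i _ => Finset.sum_congr rfl fun j _ => mul_comm _ _
    rw [swap]; ring
  have hT2 : ∑ i, ∑ j, (U + W) i j * (1 - (U + W) i j)
      = (∑ i, ∑ j, U i j * (1 - U i j)) + (∑ i, ∑ j, (1 - 2 * U i j) * W i j)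
        - (∑ i, ∑ j, W i j ^ 2) := by
    have point : ∀ i j, (U + W) i j * (1 - (U + W) i j)
        = U i j * (1 - U i j) + ((1 - 2 * U i j) * W i j - W i j ^ 2) := by
      intro i j; simp only [Matrix.add_apply]; ring
    rw [Finset.sum_congr rfl fun i _ => Finset.sum_congr rfl fun j _ => point i j]
    simp only [Finset.sum_add_distrib, Finset.sum_sub_distrib]
    ring
  have hT3 : ∑ i, ∑ j, ω i * (Uhat i j - (U + W) i j) ^ 2
      = (∑ i, ∑ j, ω i * (Uhat i j - U i j) ^ 2)
        - 2 * (∑ i, ∑ j, ω i * ((Uhat i j - U i j) * W i j))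
        + (∑ i, ∑ j, ω i * W i j ^ 2) := by
    have point : ∀ i j, ω i * (Uhat i j - (U + W) i j) ^ 2
        = ω i * (Uhat i j - U i j) ^ 2 + (ω i * W i j ^ 2
          - 2 * (ω i * ((Uhat i j - U i j) * W i j))) := by
      intro i j; simp only [Matrix.add_apply]; ring
    rw [Finset.sum_congr rfl fun i _ => Finset.sum_congr rfl fun j _ => point i j]
    have pull2 : ∑ i, ∑ j, (2 : ℝ) * (ω i * ((Uhat i j - U i j) * W i j))
        = 2 * ∑ i, ∑ j, ω i * ((Uhat i j - U i j) * W i j) := by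
      simp [Finset.mul_sum]
    simp only [Finset.sum_add_distrib, Finset.sum_sub_distrib]
    rw [pull2]; ring
  have hlin : linE Ls ω Uhat ε U W
      = (∑ i, ∑ j, ((∑ i', Ls i i' * U i' j) * W i j))
        + (1/ε) * (∑ i, ∑ j, (1 - 2 * U i j) * W i j)
        - (∑ i, ∑ j, ω i * ((Uhat i j - U i j) * W i j)) := by
    unfold linE Gm
    have point : ∀ i j, ((∑ i', Ls i i' * U i' j) + (1/ε) * (1 - 2 * U i j)
        - ω i * (Uhat i j - U i j)) * W i j
        = (∑ i', Ls i i' * U i' j) * W i j + ((1/ε) * ((1 - 2 * U i j) * W i j)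
          - ω i * ((Uhat i j - U i j) * W i j)) := by intro i j; ring
    rw [Finset.sum_congr rfl fun i _ => Finset.sum_congr rfl fun j _ => point i j]
    have pulle : ∑ i, ∑ j, (1/ε) * ((1 - 2 * U i j) * W i j)
        = (1/ε) * ∑ i, ∑ j, ((1 - 2 * U i j) * W i j) := by
      simp [Finset.mul_sum]
    simp only [Finset.sum_add_distrib, Finset.sum_sub_distrib]
    rw [pulle]; ring
  unfold En quadE
  rw [omega_pull ω (fun i j => (Uhat i j - (U + W) i j) ^ 2),
    omega_pull ω (fun i j => (Uhat i j - U i j) ^ 2)]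
  rw [hT1, hT2, hT3, hlin]
  ring

lemma linE_smul {n K : ℕ} (Ls : Matrix (Fin n) (Fin n) ℝ) (ω : Fin n → ℝ)
    (Uhat : Matrix (Fin n) (Fin K) ℝ) (ε : ℝ) (U W : Matrix (Fin n) (Fin K) ℝ) (t : ℝ) :
    linE Ls ω Uhat ε U (t • W) = t * linE Ls ω Uhat ε U W := by
  unfold linE
  rw [Finset.mul_sum]
  refine Finset.sum_congr rfl fun i _ => ?_
  rw [Finset.mul_sum]
  refine Finset.sum_congr rfl fun j _ => ?_
  simp only [Matrix.smul_apply, smul_eq_mul]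
  ring

lemma quadform_eq {n : ℕ} (Ls : Matrix (Fin n) (Fin n) ℝ) (ω : Fin n → ℝ) (v : Fin n → ℝ) :
    v ⬝ᵥ ((Ls + Matrix.diagonal ω) *ᵥ v)
      = (∑ i, v i * ∑ i', Ls i i' * v i') + ∑ i, ω i * v i ^ 2 := by
  have hmv : ∀ x, ((Ls + Matrix.diagonal ω) *ᵥ v) x = (∑ i', Ls x i' * v i') + ω x * v x := by
    intro x
    simp [Matrix.mulVec, dotProduct, Matrix.add_apply, Matrix.diagonal_apply, add_mul,
      Finset.sum_add_distrib, Finset.sum_ite_eq, ite_mul]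
  simp only [dotProduct, hmv, mul_add, Finset.sum_add_distrib]
  congr 1
  exact Finset.sum_congr rfl fun i _ => by ring

lemma quadE_eq {n K : ℕ} (Ls : Matrix (Fin n) (Fin n) ℝ) (ω : Fin n → ℝ)
    (ε : ℝ) (W : Matrix (Fin n) (Fin K) ℝ) :
    quadE Ls ω ε W
      = (1/2) * (∑ j, (fun i => W i j) ⬝ᵥ ((Ls + Matrix.diagonal ω) *ᵥ (fun i => W i j)))
        - (1/ε) * ∑ i, ∑ j, W i j ^ 2 := by
  unfold quadE
  rw [Finset.sum_congr rfl fun j _ => quadform_eq Ls ω (fun i => W i j)]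
  rw [Finset.sum_add_distrib]
  rw [Finset.sum_comm (s := Finset.univ) (t := Finset.univ) (f := fun j i => ω i * W i j ^ 2)]
  ring

lemma MW_pos_iff {n K : ℕ} (W : Matrix (Fin n) (Fin K) ℝ) (i : Fin n) (j : Fin K) :
    W i j ^ 2 ≤ ∑ a, ∑ b, W a b ^ 2 := by
  calc W i j ^ 2 ≤ ∑ b, W i b ^ 2 :=
        Finset.single_le_sum (f := fun b => W i b ^ 2) (fun b _ => sq_nonneg _) (Finset.mem_univ j)
    _ ≤ ∑ a, ∑ b, W a b ^ 2 :=
        Finset.single_le_sum (f := fun a => ∑ b, W a b ^ 2)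
          (fun a _ => Finset.sum_nonneg fun b _ => sq_nonneg _) (Finset.mem_univ i)

lemma linE_pair {n K : ℕ} (Ls : Matrix (Fin n) (Fin n) ℝ) (ω : Fin n → ℝ)
    (Uhat : Matrix (Fin n) (Fin K) ℝ) (ε : ℝ) (U : Matrix (Fin n) (Fin K) ℝ)
    (i : Fin n) (j j' : Fin K) :
    linE Ls ω Uhat ε U (pairM i j j') = Gm Ls ω Uhat ε U i j - Gm Ls ω Uhat ε U i j' := by
  unfold linE pairM
  simp only [Matrix.of_apply, mul_ite, mul_sub, mul_one, mul_zero]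
  rw [Finset.sum_eq_single i ?h1 ?h2]
  · rw [Finset.sum_congr rfl (fun b _ => if_pos rfl)]
    rw [Finset.sum_sub_distrib]
    congr 1
    · rw [Finset.sum_ite_eq' Finset.univ j (fun b => Gm Ls ω Uhat ε U i b)]
      simp
    · rw [Finset.sum_ite_eq' Finset.univ j' (fun b => Gm Ls ω Uhat ε U i b)]
      simp
  case h1 =>
    intro a _ ha
    rw [Finset.sum_congr rfl (fun b _ => if_neg ha)]
    simp
  case h2 => intro h; exact absurd (Finset.mem_univ i) h

lemma pairM_sq {n K : ℕ} (i : Fin n) (j j' : Fin K) (hjj : j ≠ j') :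
    (1:ℝ) ≤ ∑ a, ∑ b, (pairM i j j' : Matrix (Fin n) (Fin K) ℝ) a b ^ 2 := by
  have h1 : (pairM i j j' : Matrix (Fin n) (Fin K) ℝ) i j = 1 := by
    simp [pairM, hjj]
  calc (1:ℝ) = (pairM i j j' : Matrix (Fin n) (Fin K) ℝ) i j ^ 2 := by rw [h1]; norm_num
    _ ≤ _ := MW_pos_iff _ i j

/-- if `ε·λ_max(Lₛ + D_ω) < 2` then every local minimizer of `E` on `Σ` is
binary and is a strict local minimizer. -/
theorem local_min_is_binary_and_strict (n K : ℕ) (hn : 1 ≤ n) (hK : 2 ≤ K)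
    (Ls : Matrix (Fin n) (Fin n) ℝ) (hLs : Ls.PosSemidef)
    (ω : Fin n → ℝ) (hω : ∀ i, 0 ≤ ω i)
    (Uhat : Matrix (Fin n) (Fin K) ℝ) (hUhat : Uhat ∈ SigmaSet n K)
    (ε : ℝ) (hε : 0 < ε)
    (hH : (Ls + Matrix.diagonal ω).IsHermitian)
    (lam : ℝ) (hlam : IsGreatest (Set.range hH.eigenvalues) lam)
    (hsmall : ε * lam < 2)
    (Ustar : Matrix (Fin n) (Fin K) ℝ) (hUstar : Ustar ∈ SigmaSet n K)
    (hloc : ∃ r > (0 : ℝ), ∀ U ∈ SigmaSet n K, frobNorm (U - Ustar) < r →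
      En Ls ω Uhat ε Ustar ≤ En Ls ω Uhat ε U) :
    Ustar ∈ SigmaBar n K ∧
      ∃ r > (0 : ℝ), ∀ U ∈ SigmaSet n K, 0 < frobNorm (U - Ustar) →
        frobNorm (U - Ustar) < r → En Ls ω Uhat ε Ustar < En Ls ω Uhat ε U := by
  classical
  have hsym : ∀ a b, Ls a b = Ls b a := by
    intro a b
    have := congrFun (congrFun hLs.1 b) a
    simpa [Matrix.conjTranspose_apply] using this
  have hlamB : ∀ i, hH.eigenvalues i ≤ lam := fun i => hlam.2 ⟨i, rfl⟩
  have hHpsd : (Ls + Matrix.diagonal ω).PosSemidef :=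
    hLs.add (Matrix.PosSemidef.diagonal (fun i => hω i))
  have hεlam : lam - 2/ε < 0 := by
    have h2 : lam * ε < 2 := by rw [mul_comm]; exact hsmall
    rw [sub_neg, lt_div_iff₀ hε]
    exact h2
  -- quadratic bounds
  have hquad_up : ∀ W : Matrix (Fin n) (Fin K) ℝ,
      quadE Ls ω ε W ≤ (1/2) * (lam - 2/ε) * (∑ i, ∑ j, W i j ^ 2) := by
    intro W
    rw [quadE_eq]
    have h1 : ∑ j, (fun i => W i j) ⬝ᵥ ((Ls + Matrix.diagonal ω) *ᵥ (fun i => W i j))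
        ≤ lam * ∑ i, ∑ j, W i j ^ 2 := by
      calc ∑ j, (fun i => W i j) ⬝ᵥ ((Ls + Matrix.diagonal ω) *ᵥ (fun i => W i j))
          ≤ ∑ j, lam * ∑ i, W i j ^ 2 :=
            Finset.sum_le_sum fun j _ => rayleigh_upper hH hlamB (fun i => W i j)
        _ = lam * ∑ j, ∑ i, W i j ^ 2 := (Finset.mul_sum _ _ _).symm
        _ = lam * ∑ i, ∑ j, W i j ^ 2 := by rw [Finset.sum_comm]
    have hexp : (1/2) * (lam - 2/ε) * (∑ i, ∑ j, W i j ^ 2)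
        = (1/2) * (lam * ∑ i, ∑ j, W i j ^ 2) - (1/ε) * ∑ i, ∑ j, W i j ^ 2 := by ring
    rw [hexp]
    linarith
  have hquad_low : ∀ W : Matrix (Fin n) (Fin K) ℝ,
      -(1/ε) * (∑ i, ∑ j, W i j ^ 2) ≤ quadE Ls ω ε W := by
    intro W
    rw [quadE_eq]
    have h1 : 0 ≤ ∑ j, (fun i => W i j) ⬝ᵥ ((Ls + Matrix.diagonal ω) *ᵥ (fun i => W i j)) :=
      Finset.sum_nonneg fun j _ => hHpsd.dotProduct_mulVec_nonneg (fun i => W i j)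
    linarith
  obtain ⟨r₀, hr₀, hmin⟩ := hloc
  -- directional positivity of the linear term
  have hdir : ∀ W : Matrix (Fin n) (Fin K) ℝ, 0 < ∑ i, ∑ j, W i j ^ 2 →
      ∀ δ : ℝ, 0 < δ → (∀ t : ℝ, 0 < t → t ≤ δ → Ustar + t • W ∈ SigmaSet n K) →
      0 < linE Ls ω Uhat ε Ustar W := by
    intro W hMW δ hδ hfeas
    by_contra hle
    push_neg at hle
    set F := Real.sqrt (∑ i, ∑ j, W i j ^ 2) with hFdef
    have hF : 0 < F := Real.sqrt_pos.mpr hMW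
    set t := min δ (r₀ / (2 * F)) with htdef
    have ht0 : 0 < t := lt_min hδ (by positivity)
    have hmem := hfeas t ht0 (min_le_left _ _)
    have hM2 : ∑ i, ∑ j, (t • W) i j ^ 2 = t^2 * ∑ i, ∑ j, W i j ^ 2 := by
      simp only [Matrix.smul_apply, smul_eq_mul, mul_pow, Finset.mul_sum]
    have hnorm : frobNorm ((Ustar + t • W) - Ustar) = t * F := by
      rw [show (Ustar + t • W) - Ustar = t • W from add_sub_cancel_left _ _]
      unfold frobNorm
      rw [hM2, Real.sqrt_mul (sq_nonneg t), Real.sqrt_sq ht0.le]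
    have hlt : t * F < r₀ := by
      have h1 : t ≤ r₀ / (2 * F) := min_le_right _ _
      have h2 : t * F ≤ (r₀ / (2 * F)) * F := mul_le_mul_of_nonneg_right h1 hF.le
      have h3 : (r₀ / (2 * F)) * F = r₀ / 2 := by field_simp
      linarith
    have hEle := hmin _ hmem (by rw [hnorm]; exact hlt)
    rw [En_expand hsym ω Uhat ε Ustar (t • W)] at hEle
    have h1 : linE Ls ω Uhat ε Ustar (t • W) ≤ 0 := by
      rw [linE_smul]
      exact mul_nonpos_of_nonneg_of_nonpos ht0.le hle
    have h2 : quadE Ls ω ε (t • W) < 0 := by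
      have hub := hquad_up (t • W)
      have hM2pos : 0 < ∑ i, ∑ j, (t • W) i j ^ 2 := by
        rw [hM2]; positivity
      nlinarith
    linarith
  -- feasibility of pair directions
  have hfeasp : ∀ (i : Fin n) (j j' : Fin K), j ≠ j' →
      ∀ t : ℝ, 0 < t → t ≤ Ustar i j' → Ustar + t • pairM i j j' ∈ SigmaSet n K := by
    intro i j j' hjj t ht0 htle a
    constructor
    · intro b
      simp only [Matrix.add_apply, Matrix.smul_apply, smul_eq_mul, pairM, Matrix.of_apply]
      by_cases hai : a = i
      · rw [if_pos hai]
        by_cases hbj : b = j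
        · rw [if_pos hbj, if_neg (by rw [hbj]; exact hjj)]
          have := (hUstar a).1 b
          linarith
        · rw [if_neg hbj]
          by_cases hbj' : b = j'
          · rw [if_pos hbj']
            have : Ustar a b = Ustar i j' := by rw [hai, hbj']
            rw [this]
            linarith
          · rw [if_neg hbj']
            have := (hUstar a).1 b
            linarith
      · rw [if_neg hai]
        have := (hUstar a).1 b
        linarith
    · simp only [Matrix.add_apply, Matrix.smul_apply, smul_eq_mul, pairM, Matrix.of_apply]
      rw [Finset.sum_add_distrib, (hUstar a).2]
      have hz : ∑ b, t * (if a = i then (if b = j then (1:ℝ) else 0)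
          - (if b = j' then 1 else 0) else 0) = 0 := by
        by_cases hai : a = i
        · simp only [if_pos hai, mul_sub]
          rw [Finset.sum_sub_distrib]
          simp [mul_ite, Finset.sum_ite_eq']
        · simp [hai]
      rw [hz, add_zero]
  -- binary
  have hbin : ∀ i j, Ustar i j = 0 ∨ Ustar i j = 1 := by
    intro i j
    by_contra hc
    push_neg at hc
    obtain ⟨h0, h1⟩ := hc
    have hnn := (hUstar i).1
    have hsum1 := (hUstar i).2
    have hpos : 0 < Ustar i j := lt_of_le_of_ne (hnn j) (Ne.symm h0)
    have hle1 : Ustar i j ≤ 1 := by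
      calc Ustar i j ≤ ∑ b, Ustar i b :=
            Finset.single_le_sum (f := fun b => Ustar i b) (fun b _ => hnn b) (Finset.mem_univ j)
        _ = 1 := hsum1
    have hlt1 : Ustar i j < 1 := lt_of_le_of_ne hle1 h1
    have hex : ∃ j', j' ≠ j ∧ 0 < Ustar i j' := by
      by_contra hno
      push_neg at hno
      have hz : ∑ b ∈ Finset.univ.erase j, Ustar i b = 0 :=
        Finset.sum_eq_zero fun b hb =>
          le_antisymm (hno b (Finset.ne_of_mem_erase hb)) (hnn b)
      have : ∑ b, Ustar i b = Ustar i j := by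
        rw [← Finset.add_sum_erase _ _ (Finset.mem_univ j), hz, add_zero]
      rw [this] at hsum1
      exact absurd hsum1 (ne_of_lt hlt1)
    obtain ⟨j', hj'ne, hj'pos⟩ := hex
    have hp1 : 0 < linE Ls ω Uhat ε Ustar (pairM i j j') := by
      refine hdir _ (lt_of_lt_of_le one_pos (pairM_sq i j j' (Ne.symm hj'ne))) (Ustar i j')
        hj'pos ?_
      intro t ht0 ht1
      exact hfeasp i j j' (Ne.symm hj'ne) t ht0 ht1
    have hp2 : 0 < linE Ls ω Uhat ε Ustar (pairM i j' j) := by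
      refine hdir _ (lt_of_lt_of_le one_pos (pairM_sq i j' j hj'ne)) (Ustar i j) hpos ?_
      intro t ht0 ht1
      exact hfeasp i j' j hj'ne t ht0 ht1
    rw [linE_pair] at hp1 hp2
    linarith
  refine ⟨⟨hUstar, hbin⟩, ?_⟩
  -- the vertex structure
  have hjf : ∀ i, ∃ j, Ustar i j = 1 := by
    intro i
    by_contra hno
    push_neg at hno
    have hz : ∀ j, Ustar i j = 0 := fun j => (hbin i j).resolve_right (hno j)
    have hsum1 := (hUstar i).2
    rw [Finset.sum_congr rfl fun j _ => hz j] at hsum1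
    simp at hsum1
  choose jf hjf1 using hjf
  have hjf0 : ∀ i b, b ≠ jf i → Ustar i b = 0 := by
    intro i b hb
    rcases hbin i b with h | h
    · exact h
    · exfalso
      have hnn := (hUstar i).1
      have hble : Ustar i b ≤ ∑ c ∈ Finset.univ.erase (jf i), Ustar i c :=
        Finset.single_le_sum (f := fun c => Ustar i c) (fun c _ => hnn c)
          (Finset.mem_erase.mpr ⟨hb, Finset.mem_univ b⟩)
      have h2 : (2:ℝ) ≤ ∑ c, Ustar i c := by
        rw [← Finset.add_sum_erase _ _ (Finset.mem_univ (jf i)), hjf1 i]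
        rw [h] at hble
        linarith
      rw [(hUstar i).2] at h2
      linarith
  -- minimum gap δ
  have hKnt : Nontrivial (Fin K) := by
    refine ⟨⟨0, by omega⟩, ⟨1, by omega⟩, ?_⟩
    simp [Fin.ext_iff]
  set s : Finset (Fin n × Fin K) := Finset.univ.filter (fun p => p.2 ≠ jf p.1) with hs
  have hsne : s.Nonempty := by
    have hn0 : (0:ℕ) < n := hn
    obtain ⟨j0, hj0⟩ := exists_ne (jf (⟨0, hn0⟩ : Fin n))
    exact ⟨((⟨0, hn0⟩ : Fin n), j0), by simp [hs, hj0]⟩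
  set d : Fin n × Fin K → ℝ := fun p => linE Ls ω Uhat ε Ustar (pairM p.1 p.2 (jf p.1)) with hd
  set δ := s.inf' hsne d with hδdef
  have hdpos : ∀ p ∈ s, 0 < d p := by
    intro p hp
    have hpne : p.2 ≠ jf p.1 := by
      have := Finset.mem_filter.mp hp
      exact this.2
    refine hdir _ (lt_of_lt_of_le one_pos (pairM_sq p.1 p.2 (jf p.1) hpne)) 1 one_pos ?_
    intro t ht0 ht1
    exact hfeasp p.1 p.2 (jf p.1) hpne t ht0 (by rw [hjf1 p.1]; exact ht1)
  have hδpos : 0 < δ := by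
    rw [hδdef, Finset.lt_inf'_iff]
    exact hdpos
  refine ⟨ε * δ / 2, by positivity, ?_⟩
  intro U hU hFpos hFlt
  set W := U - Ustar with hW
  have hMWpos : 0 < ∑ i, ∑ j, W i j ^ 2 := by
    have := hFpos
    unfold frobNorm at this
    exact Real.sqrt_pos.mp this
  set F := frobNorm W with hFdef
  have hFM : F = Real.sqrt (∑ i, ∑ j, W i j ^ 2) := rfl
  have hF0 : 0 < F := hFpos
  have hWnn : ∀ i b, b ≠ jf i → 0 ≤ W i b := by
    intro i b hb
    have : W i b = U i b := by
      rw [hW]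
      simp [Matrix.sub_apply, hjf0 i b hb]
    rw [this]
    exact (hU i).1 b
  have hWjf : ∀ i, W i (jf i) = - ∑ b ∈ Finset.univ.erase (jf i), W i b := by
    intro i
    have h1 : ∑ b, W i b = 0 := by
      rw [hW]
      simp [Matrix.sub_apply, Finset.sum_sub_distrib, (hU i).2, (hUstar i).2]
    rw [← Finset.add_sum_erase _ _ (Finset.mem_univ (jf i))] at h1
    linarith
  set S := ∑ i, ∑ b ∈ Finset.univ.erase (jf i), W i b with hS
  have hSnn : 0 ≤ S :=
    Finset.sum_nonneg fun i _ => Finset.sum_nonneg fun b hb =>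
      hWnn i b (Finset.ne_of_mem_erase hb)
  have habs : ∀ i b, |W i b| ≤ F := by
    intro i b
    rw [hFM]
    calc |W i b| = Real.sqrt (W i b ^ 2) := (Real.sqrt_sq_eq_abs _).symm
      _ ≤ _ := Real.sqrt_le_sqrt (MW_pos_iff W i b)
  have hMle : ∑ i, ∑ j, W i j ^ 2 ≤ 2 * F * S := by
    rw [hS, Finset.mul_sum]
    apply Finset.sum_le_sum
    intro i _
    rw [← Finset.add_sum_erase _ _ (Finset.mem_univ (jf i))]
    have hsumerasenn : 0 ≤ ∑ b ∈ Finset.univ.erase (jf i), W i b :=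
      Finset.sum_nonneg fun b hb => hWnn i b (Finset.ne_of_mem_erase hb)
    have habsjf : |W i (jf i)| ≤ F := habs i (jf i)
    have heq : |W i (jf i)| = ∑ b ∈ Finset.univ.erase (jf i), W i b := by
      rw [hWjf i, abs_neg, abs_of_nonneg hsumerasenn]
    have hb1 : W i (jf i) ^ 2 ≤ F * ∑ b ∈ Finset.univ.erase (jf i), W i b := by
      have : W i (jf i) ^ 2 = |W i (jf i)| * |W i (jf i)| := by
        rw [abs_mul_abs_self]; ring
      rw [this, heq]
      exact mul_le_mul_of_nonneg_right (heq ▸ habsjf) hsumerasenn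
    have hb2 : ∑ b ∈ Finset.univ.erase (jf i), W i b ^ 2
        ≤ F * ∑ b ∈ Finset.univ.erase (jf i), W i b := by
      rw [Finset.mul_sum]
      apply Finset.sum_le_sum
      intro b hb
      have h0 := hWnn i b (Finset.ne_of_mem_erase hb)
      have hub : W i b ≤ F := le_trans (le_abs_self _) (habs i b)
      nlinarith
    linarith
  have hlinlow : δ * S ≤ linE Ls ω Uhat ε Ustar W := by
    unfold linE
    rw [hS, Finset.mul_sum]
    apply Finset.sum_le_sum
    intro i _
    rw [← Finset.add_sum_erase _ (fun j => Gm Ls ω Uhat ε Ustar i j * W i j)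
      (Finset.mem_univ (jf i))]
    rw [hWjf i]
    have hcomb : ∑ b ∈ Finset.univ.erase (jf i), Gm Ls ω Uhat ε Ustar i b * W i b
        - Gm Ls ω Uhat ε Ustar i (jf i) * ∑ b ∈ Finset.univ.erase (jf i), W i b
        = ∑ b ∈ Finset.univ.erase (jf i),
            (Gm Ls ω Uhat ε Ustar i b - Gm Ls ω Uhat ε Ustar i (jf i)) * W i b := by
      rw [Finset.mul_sum, ← Finset.sum_sub_distrib]
      exact Finset.sum_congr rfl fun b _ => by ring
    have hstep : δ * ∑ b ∈ Finset.univ.erase (jf i), W i b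
        ≤ ∑ b ∈ Finset.univ.erase (jf i),
            (Gm Ls ω Uhat ε Ustar i b - Gm Ls ω Uhat ε Ustar i (jf i)) * W i b := by
      rw [Finset.mul_sum]
      apply Finset.sum_le_sum
      intro b hb
      have hbne : b ≠ jf i := Finset.ne_of_mem_erase hb
      have hWb := hWnn i b hbne
      have hdb : δ ≤ Gm Ls ω Uhat ε Ustar i b - Gm Ls ω Uhat ε Ustar i (jf i) := by
        have hmem : (i, b) ∈ s := by
          rw [hs]
          simp [hbne]
        have hple := Finset.inf'_le d hmem
        rw [hδdef]
        calc s.inf' hsne d ≤ d (i, b) := hple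
          _ = _ := by rw [hd]; exact linE_pair Ls ω Uhat ε Ustar i b (jf i)
      exact mul_le_mul_of_nonneg_right hdb hWb
    linarith
  -- conclusion
  have hEeq : En Ls ω Uhat ε U
      = En Ls ω Uhat ε Ustar + linE Ls ω Uhat ε Ustar W + quadE Ls ω ε W := by
    have h := En_expand hsym ω Uhat ε Ustar W
    rwa [show Ustar + W = U by rw [hW]; abel] at h
  rw [hEeq]
  have hquad := hquad_low W
  have hS0 : 0 < S := by
    rcases lt_or_eq_of_le hSnn with h | h
    · exact h
    · exfalso
      rw [← h] at hMle
      have hF0' : (0:ℝ) ≤ F := hF0.le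
      nlinarith
  have hεinv : 0 < 1/ε := by positivity
  have hkey : (1/ε) * (2 * F * S) < δ * S := by
    have h2F : 2 * F < ε * δ := by linarith
    have : (1/ε) * (2 * F) < (1/ε) * (ε * δ) := by
      exact mul_lt_mul_of_pos_left h2F hεinv
    have hεδ : (1/ε) * (ε * δ) = δ := by field_simp
    rw [hεδ] at this
    calc (1/ε) * (2 * F * S) = ((1/ε) * (2 * F)) * S := by ring
      _ < δ * S := mul_lt_mul_of_pos_right this hS0
  have hqge : -(1/ε) * (2 * F * S) ≤ quadE Ls ω ε W := by
    have hmono : (1/ε) * (∑ i, ∑ j, W i j ^ 2) ≤ (1/ε) * (2 * F * S) :=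
      mul_le_mul_of_nonneg_left hMle hεinv.le
    linarith
  linarith
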